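/- arXiv:1812.00274 — 2 statements merged into one kernel-verified Lean document; each statement's English description precedes it below -/
import Mathlib

section
/- Let n ∈ ℕ and let V ⊆ ℝ^n be a nonempty compact set. For every r ∈ ℕ, Q_r^V ⊆ Q_{r+1}^V. -/
noncomputable section

open Filter Topology

/-- The `r`-stack of a `d`-tensor `T`: `Stk^r(T)(u, w) = T(u)`. -/
def stk {α : Type*} (d r : ℕ) (T : (Fin d → α) → ℝ) : (Fin (d + r) → α) → ℝ :=
  fun v => T fun i => v (Fin.castAdd r i)

/-- The symmetrization of a `d`-tensor:
`σ(T)(v) = (1/d!) ∑_{π ∈ Sym(d)} T(v ∘ π)`. -/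
def tsym {α : Type*} (d : ℕ) (T : (Fin d → α) → ℝ) : (Fin d → α) → ℝ :=
  fun v => (d.factorial : ℝ)⁻¹ * ∑ π : Equiv.Perm (Fin d), T (v ∘ π)

/-- A symmetric two-variable function identified with a `2`-tensor. -/
def kerTensor {X : Type*} (K : X → X → ℝ) : (Fin 2 → X) → ℝ :=
  fun v => K (v 0) (v 1)

/-- A kernel: a continuous symmetric real-valued function of two variables. -/
def IsKernel {X : Type*} [TopologicalSpace X] (K : X → X → ℝ) : Prop :=
  Continuous (fun p : X × X => K p.1 p.2) ∧ ∀ x y, K x y = K y x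

/-- Positive semidefiniteness of a two-variable function. -/
def IsPSDKernel {X : Type*} (K : X → X → ℝ) : Prop :=
  ∀ (k : ℕ) (v : Fin k → X) (x : Fin k → ℝ),
    0 ≤ ∑ i, ∑ j, K (v i) (v j) * x i * x j

/-- Copositivity of a two-variable function. -/
def IsCopositiveKernel {X : Type*} (K : X → X → ℝ) : Prop :=
  ∀ (k : ℕ) (v : Fin k → X) (x : Fin k → ℝ), (∀ i, 0 ≤ x i) →
    0 ≤ ∑ i, ∑ j, K (v i) (v j) * x i * x j

/-- An `(r+2)`-tensor `S` is 2-PSD if it is continuous and every slice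
`(x, y) ↦ S(x, y, z)` is a PSD kernel. -/
def Is2PSD {X : Type*} [TopologicalSpace X] (r : ℕ)
    (S : (Fin (2 + r) → X) → ℝ) : Prop :=
  Continuous S ∧ ∀ z : Fin r → X, IsPSDKernel fun x y => S (Fin.append ![x, y] z)

/-- The tensor condition defining `C_r`: `σ(Stk^r M) = σ(N)` for some
nonnegative `(r+2)`-tensor `N`. -/
def CrCond {X : Type*} (r : ℕ) (M : X → X → ℝ) : Prop :=
  ∃ N : (Fin (2 + r) → X) → ℝ, (∀ v, 0 ≤ N v) ∧
    tsym (2 + r) (stk 2 r (kerTensor M)) = tsym (2 + r) N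

/-- Membership in `C_r`: a kernel satisfying the `C_r` tensor condition. -/
def memCr {X : Type*} [TopologicalSpace X] (r : ℕ) (M : X → X → ℝ) : Prop :=
  IsKernel M ∧ CrCond r M

/-- Membership in `Q_r`: a kernel `M` with `σ(Stk^r M) = σ(N) + σ(S)` for some
nonnegative `(r+2)`-tensor `N` and 2-PSD `(r+2)`-tensor `S`. -/
def memQr {X : Type*} [TopologicalSpace X] (r : ℕ) (M : X → X → ℝ) : Prop :=
  IsKernel M ∧ ∃ N S : (Fin (2 + r) → X) → ℝ, (∀ v, 0 ≤ N v) ∧ Is2PSD r S ∧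
    tsym (2 + r) (stk 2 r (kerTensor M)) =
      fun v => tsym (2 + r) N v + tsym (2 + r) S v

/-- The space of kernels on `V`, i.e. symmetric continuous functions on
`V × V`, with the topology of `C(V × V, ℝ)` (for `V` compact this is the
supremum-norm topology). -/
def KernelSpace {n : ℕ} (V : Set (Fin n → ℝ)) : Type _ :=
  {K : C(↥V × ↥V, ℝ) // ∀ x y, K (x, y) = K (y, x)}

instance {n : ℕ} (V : Set (Fin n → ℝ)) : TopologicalSpace (KernelSpace V) :=
  instTopologicalSpaceSubtype

/-- `COP(V)` as a subset of the space of kernels on `V`. -/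
def COPSet {n : ℕ} (V : Set (Fin n → ℝ)) : Set (KernelSpace V) :=
  {K | IsCopositiveKernel fun x y => K.1 (x, y)}

/-- Extension of a permutation of `Fin d` to `Fin (d + 1)` fixing the last point. -/
def permExt (d : ℕ) (σ : Equiv.Perm (Fin d)) : Equiv.Perm (Fin (d + 1)) :=
  finSumFinEquiv.permCongr (Equiv.sumCongr σ (Equiv.refl (Fin 1)))

lemma permExt_castAdd (d : ℕ) (σ : Equiv.Perm (Fin d)) (i : Fin d) :
    permExt d σ (Fin.castAdd 1 i) = Fin.castAdd 1 (σ i) := by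
  simp [permExt, Equiv.permCongr_apply]

lemma tsym_stk_tsym {X : Type*} (d : ℕ) (A : (Fin d → X) → ℝ) :
    tsym (d + 1) (stk d 1 (tsym d A)) = tsym (d + 1) (stk d 1 A) := by
  funext v
  unfold tsym stk
  have step : ∀ σ : Equiv.Perm (Fin d),
      (∑ π : Equiv.Perm (Fin (d + 1)),
        A (fun i => v (π (Fin.castAdd 1 (σ i)))))
      = ∑ π : Equiv.Perm (Fin (d + 1)), A (fun i => v (π (Fin.castAdd 1 i))) := by
    intro σ
    apply Fintype.sum_equiv (Equiv.mulRight (permExt d σ))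
    intro π
    simp only [Equiv.coe_mulRight, Equiv.Perm.mul_apply, permExt_castAdd]
  have hcomp : ∀ (π : Equiv.Perm (Fin (d + 1))) (σ : Equiv.Perm (Fin d)),
      ((fun i => (v ∘ π) (Fin.castAdd 1 i)) ∘ σ)
        = fun i => v (π (Fin.castAdd 1 (σ i))) := by
    intro π σ; funext i; simp [Function.comp]
  calc ((d + 1).factorial : ℝ)⁻¹ * ∑ π : Equiv.Perm (Fin (d + 1)),
        (d.factorial : ℝ)⁻¹ * ∑ σ : Equiv.Perm (Fin d),
          A (((fun i => (v ∘ π) (Fin.castAdd 1 i)) ∘ σ))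
      = ((d + 1).factorial : ℝ)⁻¹ * ((d.factorial : ℝ)⁻¹ *
          ∑ σ : Equiv.Perm (Fin d), ∑ π : Equiv.Perm (Fin (d + 1)),
            A (fun i => v (π (Fin.castAdd 1 (σ i))))) := by
        rw [← Finset.mul_sum, Finset.sum_comm]
        simp only [hcomp]
    _ = ((d + 1).factorial : ℝ)⁻¹ * ((d.factorial : ℝ)⁻¹ *
          ∑ σ : Equiv.Perm (Fin d), ∑ π : Equiv.Perm (Fin (d + 1)),
            A (fun i => v (π (Fin.castAdd 1 i)))) := by
        simp only [step]
    _ = ((d + 1).factorial : ℝ)⁻¹ * ∑ π : Equiv.Perm (Fin (d + 1)),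
          A (fun i => (v ∘ π) (Fin.castAdd 1 i)) := by
        rw [Finset.sum_const]
        have hc : (Finset.univ : Finset (Equiv.Perm (Fin d))).card = d.factorial := by
          simp [Fintype.card_perm]
        rw [hc]
        have hfac : (d.factorial : ℝ) ≠ 0 := by positivity
        field_simp
        rw [nsmul_eq_mul]
        rfl

lemma tsym_add {X : Type*} (d : ℕ) (A B : (Fin d → X) → ℝ) :
    tsym d (fun v => A v + B v) = fun v => tsym d A v + tsym d B v := by
  funext v
  unfold tsym
  rw [Finset.sum_add_distrib]
  ring

/-- `Q_r^V ⊆ Q_{r+1}^V`. -/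
theorem stmt4 (n : ℕ) (V : Set (Fin n → ℝ)) (hVne : V.Nonempty)
    (hVc : IsCompact V) (r : ℕ) (M : ↥V → ↥V → ℝ) (hM : memQr r M) :
    memQr (r + 1) M := by
  obtain ⟨hK, N, S, hN, hS, hEq⟩ := hM
  refine ⟨hK, stk (2 + r) 1 N, stk (2 + r) 1 S, fun v => hN _, ?_, ?_⟩
  · constructor
    · exact hS.1.comp (continuous_pi fun i => continuous_apply _)
    · intro z
      have hz : ∀ x y : ↥V,
          stk (2 + r) 1 S ((Fin.append ![x, y] z : Fin (2 + (r + 1)) → ↥V))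
            = S (Fin.append ![x, y] (fun j : Fin r => z (Fin.castAdd 1 j))) := by
        intro x y
        unfold stk
        congr 1
        funext i
        refine Fin.addCases (fun j => ?_) (fun j => ?_) i
        · have h1 : Fin.castAdd 1 (Fin.castAdd r j) = Fin.castAdd (r + 1) j := rfl
          rw [h1, Fin.append_left, Fin.append_left]
        · have h1 : Fin.castAdd 1 (Fin.natAdd 2 j) = Fin.natAdd 2 (Fin.castAdd 1 j) := rfl
          rw [h1, Fin.append_right, Fin.append_right]
      intro k v x
      have := hS.2 (fun j : Fin r => z (Fin.castAdd 1 j)) k v x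
      simpa only [hz] using this
  · have hstk : stk 2 (r + 1) (kerTensor M)
        = stk (2 + r) 1 (stk 2 r (kerTensor M)) := rfl
    calc tsym (2 + (r + 1)) (stk 2 (r + 1) (kerTensor M))
        = tsym (2 + r + 1) (stk (2 + r) 1 (stk 2 r (kerTensor M))) := by
          rw [hstk]
          rfl
      _ = tsym (2 + r + 1) (stk (2 + r) 1 (tsym (2 + r) (stk 2 r (kerTensor M)))) := by
          rw [tsym_stk_tsym]
      _ = tsym (2 + r + 1) (stk (2 + r) 1
            (fun v => tsym (2 + r) N v + tsym (2 + r) S v)) := by rw [hEq]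
      _ = tsym (2 + r + 1)
            (fun v => stk (2 + r) 1 (tsym (2 + r) N) v
              + stk (2 + r) 1 (tsym (2 + r) S) v) := rfl
      _ = fun v => tsym (2 + r + 1) (stk (2 + r) 1 (tsym (2 + r) N)) v
            + tsym (2 + r + 1) (stk (2 + r) 1 (tsym (2 + r) S)) v := tsym_add _ _ _
      _ = fun v => tsym (2 + (r + 1)) (stk (2 + r) 1 N) v
            + tsym (2 + (r + 1)) (stk (2 + r) 1 S) v := by
          rw [tsym_stk_tsym, tsym_stk_tsym]
          rfl
end
end

section
/- Let n ∈ ℕ, let V ⊆ ℝ^n be a nonempty compact set, let r ∈ ℕ and let K be a kernel on V. Then K ∈ C_r^V if and only if for every finite subset U ⊆ V the restriction K|_{U×U} belongs to C_r^U (the set C_r defined over the finite set U, where all functions on U are continuous). -/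
noncomputable section

open Filter Topology

lemma tsym_nonneg {α : Type*} (d : ℕ) (T : (Fin d → α) → ℝ) (hT : ∀ v, 0 ≤ T v)
    (v : Fin d → α) : 0 ≤ tsym d T v := by
  unfold tsym
  have : (0:ℝ) ≤ ∑ π : Equiv.Perm (Fin d), T (v ∘ π) :=
    Finset.sum_nonneg fun π _ => hT _
  positivity

lemma tsym_idem {α : Type*} (d : ℕ) (T : (Fin d → α) → ℝ) :
    tsym d (tsym d T) = tsym d T := by
  funext v
  unfold tsym
  have h : ∀ π : Equiv.Perm (Fin d),
      ∑ σ : Equiv.Perm (Fin d), T ((v ∘ π) ∘ σ) = ∑ σ : Equiv.Perm (Fin d), T (v ∘ σ) := by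
    intro π
    apply Fintype.sum_bijective (π * ·) (Group.mulLeft_bijective π)
    intro σ
    rfl
  simp only [h]
  rw [Finset.sum_const, Finset.card_univ, Fintype.card_perm, Fintype.card_fin, nsmul_eq_mul]
  have hd : (d.factorial : ℝ) ≠ 0 := Nat.cast_ne_zero.mpr d.factorial_ne_zero
  field_simp

lemma crCond_iff {X : Type*} (r : ℕ) (M : X → X → ℝ) :
    CrCond r M ↔ ∀ v, 0 ≤ tsym (2 + r) (stk 2 r (kerTensor M)) v := by
  constructor
  · rintro ⟨N, hN, heq⟩ v
    rw [heq]
    exact tsym_nonneg _ _ hN v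
  · intro h
    exact ⟨tsym (2 + r) (stk 2 r (kerTensor M)), h, (tsym_idem _ _).symm⟩

lemma tsym_stk_comp {X Y : Type*} (r : ℕ) (K : Y → Y → ℝ) (f : X → Y)
    (v : Fin (2 + r) → X) :
    tsym (2 + r) (stk 2 r (kerTensor fun x y => K (f x) (f y))) v =
      tsym (2 + r) (stk 2 r (kerTensor K)) (f ∘ v) := rfl

/-- a kernel `K` on `V` lies in `C_r^V` iff for every finite
`U ⊆ V` the restriction of `K` to `U × U` lies in `C_r^U` (over a finite set
all functions are continuous, so membership in `C_r^U` amounts to symmetry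
together with the `C_r` tensor condition). -/
theorem stmt8 (n : ℕ) (V : Set (Fin n → ℝ)) (hVne : V.Nonempty)
    (hVc : IsCompact V) (r : ℕ) (K : ↥V → ↥V → ℝ) (hK : IsKernel K) :
    memCr r K ↔
      ∀ (U : Set (Fin n → ℝ)) (hUV : U ⊆ V), U.Finite →
        ((∀ x y : ↥U, K (Set.inclusion hUV x) (Set.inclusion hUV y) =
            K (Set.inclusion hUV y) (Set.inclusion hUV x)) ∧
          CrCond r fun x y : ↥U =>
            K (Set.inclusion hUV x) (Set.inclusion hUV y)) := by
  constructor
  · rintro ⟨-, hC⟩ U hUV hUfin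
    refine ⟨fun x y => hK.2 _ _, ?_⟩
    rw [crCond_iff] at hC ⊢
    intro v
    rw [tsym_stk_comp]
    exact hC _
  · intro h
    refine ⟨hK, ?_⟩
    rw [crCond_iff]
    intro v
    set U : Set (Fin n → ℝ) := Set.range fun i => ((v i : ↥V) : Fin n → ℝ) with hU
    have hUV : U ⊆ V := by
      rintro x ⟨i, rfl⟩
      exact (v i).2
    have hUfin : U.Finite := Set.finite_range _
    obtain ⟨-, hC⟩ := h U hUV hUfin
    rw [crCond_iff] at hC
    have hw : ∀ i, (⟨((v i : ↥V) : Fin n → ℝ), Set.mem_range_self i⟩ : ↥U) ∈ Set.univ :=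
      fun _ => trivial
    set w : Fin (2 + r) → ↥U := fun i => ⟨((v i : ↥V) : Fin n → ℝ), Set.mem_range_self i⟩
    have := hC w
    rw [tsym_stk_comp] at this
    have hvw : (Set.inclusion hUV) ∘ w = v := by
      funext i
      exact Subtype.ext rfl
    rwa [hvw] at this
end
end
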